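/- arXiv:math/0412405 — 3 statements merged into one kernel-verified Lean document; each statement's English description precedes it below -/
import Mathlib

section
/- In the group of unit quaternions modulo ±1 (i.e. SU(2)/Z₂), set ρ(l₁) = ±i, ρ(l₂) = ±j, ρ(l₃) = ±k·exp(π(i cos φ + j sin φ)/3), ρ(l₄) = ±exp(−π(i cos φ + j sin φ)/3) for a real parameter φ. Then ρ(l₁)ρ(l₂)ρ(l₃)ρ(l₄) = ±1, ρ(l₁)² = ρ(l₂)² = ρ(l₃)² = ±1, and ρ(l₄)³ = ±1, so ρ defines a homomorphism from the group ⟨l₁,l₂,l₃,l₄ : l₁l₂l₃l₄ = l₁² = l₂² = l₃² = l₄³ = 1⟩ to SU(2)/Z₂. -/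
open Quaternion

set_option maxHeartbeats 1000000

abbrev qmk (a b c d : ℝ) : ℍ[ℝ] := ⟨a, b, c, d⟩

lemma mk_eq_qmk (a b c d : ℝ) : (⟨a, b, c, d⟩ : ℍ[ℝ]) = qmk a b c d := rfl

@[simp] lemma qmk_re (a b c d : ℝ) : (qmk a b c d).re = a := rfl

@[simp] lemma qmk_imI (a b c d : ℝ) : (qmk a b c d).imI = b := rfl

@[simp] lemma qmk_imJ (a b c d : ℝ) : (qmk a b c d).imJ = c := rfl

@[simp] lemma qmk_imK (a b c d : ℝ) : (qmk a b c d).imK = d := rfl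

lemma norm_pure_aux (q : Quaternion ℝ) (r : ℝ) (hr : 0 ≤ r)
    (h : Quaternion.normSq q = r ^ 2) : ‖q‖ = r := by
  have h2 := Quaternion.normSq_eq_norm_mul_self q
  nlinarith [norm_nonneg q]

lemma exp_pure_aux (q : Quaternion ℝ) (h0 : q.re = 0)
    (h : Quaternion.normSq q = (Real.pi / 3) ^ 2) :
    NormedSpace.exp q = ((1/2 : ℝ) : Quaternion ℝ)
      + ((Real.sqrt 3 / 2) / (Real.pi / 3)) • q := by
  have hpi : (0:ℝ) < Real.pi := Real.pi_pos
  have hn : ‖q‖ = Real.pi / 3 := norm_pure_aux q _ (by positivity) h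
  rw [Quaternion.exp_of_re_eq_zero _ h0, hn, Real.cos_pi_div_three, Real.sin_pi_div_three]

/-- In the unit quaternions (identified with SU(2)), with
`q₁ = i`, `q₂ = j`, `q₃ = k·exp(π(i cos φ + j sin φ)/3)`,
`q₄ = exp(−π(i cos φ + j sin φ)/3)`, the relations of the orbifold fundamental
group of the (2,2,2,3)-sphere hold up to sign:
`q₁q₂q₃q₄ = ±1`, `q₁² = q₂² = q₃² = ±1`, `q₄³ = ±1`.  Hence
`l₁ ↦ ±q₁, l₂ ↦ ±q₂, l₃ ↦ ±q₃, l₄ ↦ ±q₄` defines a homomorphism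
`⟨l₁,l₂,l₃,l₄ : l₁l₂l₃l₄ = l₁² = l₂² = l₃² = l₄³ = 1⟩ → SU(2)/ℤ₂`. -/
theorem stmt7 (φ : ℝ)
    (i' j' k' u q₁ q₂ q₃ q₄ : ℍ[ℝ])
    (hi : i' = ⟨0, 1, 0, 0⟩) (hj : j' = ⟨0, 0, 1, 0⟩) (hk : k' = ⟨0, 0, 0, 1⟩)
    (hu : u = (Real.pi / 3) • (Real.cos φ • i' + Real.sin φ • j'))
    (h₁ : q₁ = i') (h₂ : q₂ = j')
    (h₃ : q₃ = k' * NormedSpace.exp u)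
    (h₄ : q₄ = NormedSpace.exp (-u)) :
    (q₁ * q₂ * q₃ * q₄ = 1 ∨ q₁ * q₂ * q₃ * q₄ = -1) ∧
    (q₁ ^ 2 = 1 ∨ q₁ ^ 2 = -1) ∧ (q₂ ^ 2 = 1 ∨ q₂ ^ 2 = -1) ∧
    (q₃ ^ 2 = 1 ∨ q₃ ^ 2 = -1) ∧ (q₄ ^ 3 = 1 ∨ q₄ ^ 3 = -1) := by
  have hpi : (0:ℝ) < Real.pi := Real.pi_pos
  simp only [mk_eq_qmk] at hi hj hk
  have s3 : Real.sqrt 3 ^ 2 = 3 := Real.sq_sqrt (by norm_num)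
  have trig : Real.sin φ ^ 2 + Real.cos φ ^ 2 = 1 := Real.sin_sq_add_cos_sq φ
  have hu' : u = qmk 0 (Real.pi / 3 * Real.cos φ) (Real.pi / 3 * Real.sin φ) 0 := by
    rw [hu, hi, hj]
    ext <;> simp [Quaternion.re_smul, Quaternion.imI_smul, Quaternion.imJ_smul,
      Quaternion.imK_smul, Quaternion.re_add, Quaternion.imI_add, Quaternion.imJ_add,
      Quaternion.imK_add]
  have hns : Quaternion.normSq u = (Real.pi / 3) ^ 2 := by
    rw [hu', Quaternion.normSq_def']; simp only [qmk_re, qmk_imI, qmk_imJ, qmk_imK]; nlinarith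
  have hns' : Quaternion.normSq (-u) = (Real.pi / 3) ^ 2 := by
    rw [Quaternion.normSq_neg, hns]
  have h0 : u.re = 0 := by rw [hu']
  have heu : NormedSpace.exp u =
      qmk (1/2) (Real.sqrt 3 / 2 * Real.cos φ) (Real.sqrt 3 / 2 * Real.sin φ) 0 := by
    rw [exp_pure_aux u h0 hns, hu']
    ext <;>
      simp only [Quaternion.re_add, Quaternion.imI_add, Quaternion.imJ_add, Quaternion.imK_add,
        Quaternion.re_smul, Quaternion.imI_smul, Quaternion.imJ_smul, Quaternion.imK_smul,
        Quaternion.re_coe, Quaternion.imI_coe, Quaternion.imJ_coe, Quaternion.imK_coe, qmk_re, qmk_imI, qmk_imJ, qmk_imK,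
        smul_eq_mul] <;>
      field_simp <;> ring
  have henu : NormedSpace.exp (-u) =
      qmk (1/2) (-(Real.sqrt 3 / 2 * Real.cos φ)) (-(Real.sqrt 3 / 2 * Real.sin φ)) 0 := by
    rw [exp_pure_aux (-u) (by rw [hu']; simp) hns', hu']
    ext <;>
      simp only [Quaternion.re_neg, Quaternion.imI_neg, Quaternion.imJ_neg, Quaternion.imK_neg,
        Quaternion.re_add, Quaternion.imI_add, Quaternion.imJ_add, Quaternion.imK_add,
        Quaternion.re_smul, Quaternion.imI_smul, Quaternion.imJ_smul, Quaternion.imK_smul,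
        Quaternion.re_coe, Quaternion.imI_coe, Quaternion.imJ_coe, Quaternion.imK_coe, qmk_re, qmk_imI, qmk_imJ, qmk_imK,
        smul_eq_mul, mul_neg, neg_zero, mul_zero, add_zero, zero_add] <;>
      field_simp <;> ring
  have hcube : (NormedSpace.exp (-u)) ^ 3 = -1 := by
    let +nondep : NormedAlgebra ℚ ℍ := .restrictScalars ℚ ℝ ℍ
    rw [← NormedSpace.exp_nsmul]
    have h3u : (3 : ℕ) • (-u) =
        qmk 0 (-(Real.pi * Real.cos φ)) (-(Real.pi * Real.sin φ)) 0 := by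
      rw [hu']; ext <;>
        simp only [smul_neg, ← Nat.cast_smul_eq_nsmul ℝ, Quaternion.re_neg, Quaternion.imI_neg,
          Quaternion.imJ_neg, Quaternion.imK_neg, Quaternion.re_smul, Quaternion.imI_smul,
          Quaternion.imJ_smul, Quaternion.imK_smul, qmk_re, qmk_imI, qmk_imJ, qmk_imK, smul_eq_mul] <;> push_cast <;> ring
    have hn3 : ‖(3 : ℕ) • (-u)‖ = Real.pi := by
      apply norm_pure_aux _ _ Real.pi_pos.le
      rw [h3u, Quaternion.normSq_def']; simp only [qmk_re, qmk_imI, qmk_imJ, qmk_imK]; nlinarith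
    rw [Quaternion.exp_of_re_eq_zero _ (by rw [h3u]), hn3, Real.cos_pi, Real.sin_pi]
    simp
  subst h₁ h₂ h₃ h₄ hi hj hk
  rw [heu, henu]
  refine ⟨Or.inr ?_, Or.inr ?_, Or.inr ?_, Or.inr ?_, Or.inr (by rw [← henu]; exact hcube)⟩ <;>
    ext <;>
    simp only [pow_succ, pow_zero, one_mul, Quaternion.re_mul, Quaternion.imI_mul,
      Quaternion.imJ_mul, Quaternion.imK_mul, Quaternion.re_neg, Quaternion.imI_neg,
      Quaternion.imJ_neg, Quaternion.imK_neg, Quaternion.re_one, Quaternion.imI_one,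
      Quaternion.imJ_one, Quaternion.imK_one, qmk_re, qmk_imI, qmk_imJ, qmk_imK] <;>
    nlinarith [trig, s3, sq_nonneg (Real.sin φ), sq_nonneg (Real.cos φ)]
end

section
/- In the unit quaternions, set A = exp(πk/4)·i, B = j, L = k. Then the commutator [A,B]·L = A B A⁻¹ B⁻¹ L equals ±1 and L² = −1. Hence a ↦ ±A, b ↦ ±B, l ↦ ±L defines a homomorphism from ⟨a, b, l : [a,b]l = l² = 1⟩ to SU(2)/Z₂. -/
open Quaternion

/-- In the unit quaternions, with `A = exp(πk/4)·i`, `B = j`,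
`L = k`, one has `[A,B]·L = A B A⁻¹ B⁻¹ L = ±1` and `L² = −1`.  Hence
`a ↦ ±A, b ↦ ±B, l ↦ ±L` defines a homomorphism from the orbifold fundamental
group `⟨a, b, l : [a,b]l = l² = 1⟩` of the one-punctured torus to SU(2)/ℤ₂. -/
theorem stmt8 (i' j' k' A B L : ℍ[ℝ])
    (hi : i' = ⟨0, 1, 0, 0⟩) (hj : j' = ⟨0, 0, 1, 0⟩) (hk : k' = ⟨0, 0, 0, 1⟩)
    (hA : A = NormedSpace.exp ((Real.pi / 4) • k') * i')
    (hB : B = j') (hL : L = k') :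
    (A * B * A⁻¹ * B⁻¹ * L = 1 ∨ A * B * A⁻¹ * B⁻¹ * L = -1) ∧
    L ^ 2 = -1 := by
  have hi' : i'.re = 0 ∧ i'.imI = 1 ∧ i'.imJ = 0 ∧ i'.imK = 0 := by subst hi; exact ⟨rfl, rfl, rfl, rfl⟩
  have hj' : j'.re = 0 ∧ j'.imI = 0 ∧ j'.imJ = 1 ∧ j'.imK = 0 := by subst hj; exact ⟨rfl, rfl, rfl, rfl⟩
  have hk' : k'.re = 0 ∧ k'.imI = 0 ∧ k'.imJ = 0 ∧ k'.imK = 1 := by subst hk; exact ⟨rfl, rfl, rfl, rfl⟩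
  set c := Real.cos (Real.pi / 4) with hc
  set s := Real.sin (Real.pi / 4) with hs
  have hsc : s * s + c * c = 1 := by
    have := Real.sin_sq_add_cos_sq (Real.pi / 4)
    nlinarith [this]
  have hpi : (0:ℝ) < Real.pi / 4 := by positivity
  have hnormk : ‖k'‖ = 1 := by
    have h1 : normSq k' = 1 := by simp [hk', Quaternion.normSq_def']
    nlinarith [Quaternion.normSq_eq_norm_mul_self k', norm_nonneg k']
  have hnorm : ‖(Real.pi / 4) • k'‖ = Real.pi / 4 := by
    rw [norm_smul, hnormk, Real.norm_eq_abs, abs_of_pos hpi, mul_one]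
  have hexp : NormedSpace.exp ((Real.pi / 4) • k') = (c : ℍ[ℝ]) + s • k' := by
    rw [Quaternion.exp_of_re_eq_zero ((Real.pi / 4) • k') (by simp [hk']), hnorm, ← hc, ← hs,
      smul_smul, div_mul_cancel₀]
    exact hpi.ne'
  have hAval : A = c • i' + s • j' := by
    rw [hA, hexp]
    ext <;> simp [hi', hj', hk', Quaternion.re_mul]
  have hAinv : A⁻¹ = -(c • i') - s • j' := by
    apply inv_eq_of_mul_eq_one_right
    rw [hAval]
    ext <;> simp [hi', hj', hk', Quaternion.re_mul] <;> nlinarith [hsc]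
  have hBinv : B⁻¹ = -j' := by
    apply inv_eq_of_mul_eq_one_right
    rw [hB]
    ext <;> simp [hi', hj', hk', Quaternion.re_mul]
  have hsv : s = Real.sqrt 2 / 2 := Real.sin_pi_div_four
  have hcv : c = Real.sqrt 2 / 2 := Real.cos_pi_div_four
  have h2 : Real.sqrt 2 * Real.sqrt 2 = 2 := Real.mul_self_sqrt (by norm_num)
  have hss : s * s = 1 / 2 := by rw [hsv, div_mul_div_comm, h2]; norm_num
  have hcc : c * c = 1 / 2 := by rw [hcv, div_mul_div_comm, h2]; norm_num
  have hsc2 : s * c = 1 / 2 := by rw [hsv, hcv, div_mul_div_comm, h2]; norm_num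
  refine ⟨Or.inl ?_, ?_⟩
  · rw [hAinv, hBinv, hAval, hB, hL]
    ext <;> simp [hi', hj', hk', Quaternion.re_mul] <;> linarith [hss, hcc, hsc2]
  · rw [hL, sq]
    ext <;> simp [hi', hj', hk', Quaternion.re_mul]
end

section
/- The representation l₁ ↦ ±i, l₂ ↦ ±j, l₃ ↦ ±k·exp(π i/3), l₄ ↦ ±exp(−π i/3) of the orbifold fundamental group of the (2,2,2,3)-sphere into SU(2)/Z₂ is irreducible: the induced action on CP¹ (equivalently, the induced rotation action on the 2-sphere) has no common fixed point. -/
open Quaternion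

/-- The representation `l₁ ↦ ±i`, `l₂ ↦ ±j`, `l₃ ↦ ±k·exp(πi/3)`,
`l₄ ↦ ±exp(−πi/3)` of the orbifold fundamental group of the (2,2,2,3)-sphere
into SU(2)/ℤ₂ is irreducible: no nonzero purely imaginary quaternion (i.e. no
nonzero vector of ℝ³, equivalently no point of ℂP¹) is fixed by all of the
induced rotations `v ↦ q v q⁻¹`. -/
theorem stmt9 (i' j' k' q₁ q₂ q₃ q₄ : ℍ[ℝ])
    (hi : i' = ⟨0, 1, 0, 0⟩) (hj : j' = ⟨0, 0, 1, 0⟩) (hk : k' = ⟨0, 0, 0, 1⟩)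
    (h₁ : q₁ = i') (h₂ : q₂ = j')
    (h₃ : q₃ = k' * NormedSpace.exp ((Real.pi / 3) • i'))
    (h₄ : q₄ = NormedSpace.exp (-((Real.pi / 3) • i'))) :
    ¬ ∃ v : ℍ[ℝ], v ≠ 0 ∧ v.re = 0 ∧
      q₁ * v * q₁⁻¹ = v ∧ q₂ * v * q₂⁻¹ = v ∧
      q₃ * v * q₃⁻¹ = v ∧ q₄ * v * q₄⁻¹ = v := by
  rintro ⟨v, hv, hre, hf1, hf2, -, -⟩
  have hine : q₁ ≠ 0 := by
    rw [h₁, hi]; intro h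
    exact one_ne_zero (congrArg QuaternionAlgebra.imI h)
  have hjne : q₂ ≠ 0 := by
    rw [h₂, hj]; intro h
    exact one_ne_zero (congrArg QuaternionAlgebra.imJ h)
  have e1 : q₁ * v = v * q₁ := by
    have := congrArg (fun x => x * q₁) hf1
    simpa [mul_assoc, inv_mul_cancel₀ hine] using this
  have e2 : q₂ * v = v * q₂ := by
    have := congrArg (fun x => x * q₂) hf2
    simpa [mul_assoc, inv_mul_cancel₀ hjne] using this
  rw [h₁, hi] at e1
  rw [h₂, hj] at e2
  apply hv
  rw [Quaternion.ext_iff] at e1 e2 ⊢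
  erw [Quaternion.re_mul, Quaternion.imI_mul, Quaternion.imJ_mul, Quaternion.imK_mul, Quaternion.re_mul, Quaternion.imI_mul, Quaternion.imJ_mul, Quaternion.imK_mul] at e1 e2
  simp [Quaternion.re_mul, Quaternion.imI_mul, Quaternion.imJ_mul, Quaternion.imK_mul] at e1 e2 ⊢
  exact ⟨hre, by linarith [e2.2], by linarith [e1.2], by linarith [e1.1]⟩
end
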